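/- Let m, n, r be integers with 0 < m < n, gcd(m,n) = 1 and r ≥ 0. For every z ∈ ℂ with |z| = 1 and |z − 1| < 1, |X_{m,n,r}(z)| < 1.072 · (r!·Γ(1−m/n)/Γ(r+1−m/n)) · |1 + √z|^{2r}, where √z is the principal square root. -/

import Mathlib

open Finset MeasureTheory

noncomputable section

/-- Coefficient of `z^k` in `X_{m,n,r}(z) = ₂F₁(-r, -r-m/n; 1-m/n; z)`. -/
def Xcoef (m n r k : ℕ) : ℚ :=
  (r.choose k : ℚ) * ∏ j ∈ Finset.range k, ((((r : ℚ) - j) * n + m) / (((j : ℚ) + 1) * n - m))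

/-- `X_{m,n,r}` as a function on `ℂ`. -/
def Xfun (m n r : ℕ) (z : ℂ) : ℂ :=
  ∑ k ∈ Finset.range (r + 1), (Xcoef m n r k : ℂ) * z ^ k

/-- `Y_{m,n,r}(z) = z^r · X_{m,n,r}(1/z)` as a polynomial function on `ℂ`. -/
def Yfun (m n r : ℕ) (z : ℂ) : ℂ :=
  ∑ k ∈ Finset.range (r + 1), (Xcoef m n r k : ℂ) * z ^ (r - k)

/-- `X_{m,n,r}` as a function on `ℝ`. -/
def XfunR (m n r : ℕ) (z : ℝ) : ℝ :=
  ∑ k ∈ Finset.range (r + 1), (Xcoef m n r k : ℝ) * z ^ k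

/-- `X_{m,n,r}` as a polynomial over `ℂ`. -/
def XpolyC (m n r : ℕ) : Polynomial ℂ :=
  ∑ k ∈ Finset.range (r + 1), Polynomial.C (Xcoef m n r k : ℂ) * Polynomial.X ^ k

/-- `D_{m,n,r}`: the least positive integer clearing the denominators of `X_{m,n,r}`. -/
def Dden (m n r : ℕ) : ℕ :=
  sInf {D : ℕ | 0 < D ∧ ∀ k : ℕ, ∃ z : ℤ, (D : ℚ) * Xcoef m n r k = (z : ℚ)}

/-- The squarefree core of an integer `d`: the unique squarefree integer such that
`d/core d` is a square. -/
def intCore (d : ℤ) : ℤ :=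
  d.sign * ∏ p ∈ d.natAbs.primeFactors, (p : ℤ) ^ (d.natAbs.factorization p % 2)

/-- The polynomial `X_{m,n,r}(1 - √d · z)` over `ℂ` (principal square root of `d`). -/
def Xshift (d : ℤ) (m n r : ℕ) : Polynomial ℂ :=
  ∑ k ∈ Finset.range (r + 1), Polynomial.C (Xcoef m n r k : ℂ) *
    (1 - Polynomial.C ((d : ℂ) ^ (1/2 : ℂ)) * Polynomial.X) ^ k

/-- `N_{d,m,n,r}`: the largest positive integer `N` such that
`(D_{m,n,r}/N)·X_{m,n,r}(1-√d·z)` has all coefficients in `ℤ[√core d]`. -/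
def Nden (d : ℤ) (m n r : ℕ) : ℕ :=
  sSup {N : ℕ | 0 < N ∧ ∀ k : ℕ, ∃ u v : ℤ,
    ((Dden m n r : ℂ) / (N : ℂ)) * (Xshift d m n r).coeff k
      = (u : ℂ) + (v : ℂ) * ((intCore d : ℂ) ^ (1/2 : ℂ))}

/-- `𝒩_{d,n} = ∏_{p | n} p^{min(v_p(d)/2, v_p(n)+1/(p-1))}`. -/
def calN (d : ℤ) (n : ℕ) : ℝ :=
  ∏ p ∈ n.primeFactors,
    (p : ℝ) ^ (min ((d.natAbs.factorization p : ℝ) / 2)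
      ((n.factorization p : ℝ) + 1 / ((p : ℝ) - 1)))

/-- `μ_n = ∏_{p | n} p^{1/(p-1)}`. -/
def muN (n : ℕ) : ℝ := ∏ p ∈ n.primeFactors, (p : ℝ) ^ (1 / ((p : ℝ) - 1))

/-- The Gamma-function factor appearing in the admissibility condition. -/
def gammaMax (m n r : ℕ) : ℝ :=
  max (max 1 (Real.Gamma (1 - (m : ℝ) / n) * r.factorial /
      Real.Gamma ((r : ℝ) + 1 - (m : ℝ) / n)))
    ((n : ℝ) * Real.Gamma ((r : ℝ) + 1 + (m : ℝ) / n) /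
      ((m : ℝ) * Real.Gamma ((m : ℝ) / n) * r.factorial))

/-- `(C, D)` is admissible for `(d, n)`. -/
def Admissible (d : ℤ) (n : ℕ) (C D : ℝ) : Prop :=
  ∀ m r : ℕ, 0 < m → 2 * m < n → Nat.Coprime m n →
    gammaMax m n r * (Dden m n r : ℝ) / (Nden d m n r : ℝ) < C * (D / calN d n) ^ r

/-- `K` is an imaginary quadratic field `ℚ(√-t)` viewed as a subfield of `ℂ`. -/
def IsImagQuadratic (K : Subfield ℂ) : Prop :=
  ∃ t : ℕ, 0 < t ∧ Squarefree t ∧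
    K = Subfield.closure {Complex.I * (Real.sqrt t : ℂ)}

/-- Pochhammer symbol `(x)_k = x(x+1)⋯(x+k-1)` over `ℂ`. -/
def poch (x : ℂ) (k : ℕ) : ℂ := ∏ j ∈ Finset.range k, (x + j)

/-- The remainder function `R_{m,n,r}(z)`. -/
def Rfun (m n r : ℕ) (z : ℂ) : ℂ :=
  ((∏ j ∈ Finset.range (r + 1), ((j : ℂ) + (m : ℂ) / n)) /
      ∏ j ∈ Finset.range (r + 1), ((r : ℂ) + 1 + j)) *
    ∑' k : ℕ, poch ((r : ℂ) + 1 - (m : ℂ) / n) k * poch ((r : ℂ) + 1) k /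
      (poch (2 * (r : ℂ) + 2) k * (k.factorial : ℂ)) * (1 - z) ^ k

section Aux
open Complex

/-- partial Pochhammer-type product -/
def Pc (c : ℂ) (j : ℕ) : ℂ := ∏ i ∈ Finset.range j, (c - i)

def Ff (a b z w : ℂ) (i l : ℕ) : ℂ :=
  z ^ i * Pc b i * Pc a l * ((1 + z * w) ^ (b - i) * (1 + w) ^ (a - l))

def Hf (a b z : ℂ) (k : ℕ) (w : ℂ) : ℂ :=
  ∑ i ∈ Finset.range (k + 1), (k.choose i : ℂ) * Ff a b z w i (k - i)

lemma Pc_succ (c : ℂ) (j : ℕ) : Pc c (j+1) = Pc c j * (c - j) := Finset.prod_range_succ _ _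

lemma mem_slit {u : ℂ} (hu : ‖u‖ < 1) : 1 + u ∈ Complex.slitPlane := by
  rw [Complex.mem_slitPlane_iff]
  left
  have h1 : |u.re| ≤ ‖u‖ := Complex.abs_re_le_norm u
  simp only [Complex.add_re, Complex.one_re]
  cases' abs_le.1 h1 with h2 h3
  linarith

lemma hasDerivAt_cpow_affine {u w c : ℂ} (h : ‖(u * w)‖ < 1) :
    HasDerivAt (fun w => (1 + u * w) ^ c) ((c * (1 + u * w) ^ (c - 1)) * u) w := by
  have h1 : HasDerivAt (fun w : ℂ => 1 + u * w) u w := by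
    simpa using ((hasDerivAt_id w).const_mul u).const_add 1
  exact h1.cpow_const (mem_slit h)

lemma key_step (a b z : ℂ) (hz : ‖z‖ ≤ 1) (k : ℕ) {w : ℂ}
    (hw : ‖w‖ < 1) :
    HasDerivAt (Hf a b z k) (Hf a b z (k + 1) w) w := by
  have hzw : ‖(z * w)‖ < 1 := by
    rw [norm_mul]
    calc ‖z‖ * ‖w‖ ≤ 1 * ‖w‖ := by
          apply mul_le_mul_of_nonneg_right hz (norm_nonneg w)
      _ < 1 := by simpa using hw
  have hw' : ‖((1:ℂ) * w)‖ < 1 := by simpa using hw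
  -- derivative of each summand
  have hterm : ∀ j ∈ Finset.range (k+1), HasDerivAt (fun w => (k.choose j : ℂ) * Ff a b z w j (k - j))
      ((k.choose j : ℂ) * (Ff a b z w (j+1) (k-j) + Ff a b z w j (k-j+1))) w := by
    intro j hj
    have h1 := hasDerivAt_cpow_affine (u := z) (c := b - j) hzw
    have h2 : HasDerivAt (fun w : ℂ => (1 + w) ^ (a - (k - j : ℕ)))
        (((a - (k-j:ℕ)) * (1 + w) ^ (a - (k-j:ℕ) - 1)) * 1) w := by
      simpa using hasDerivAt_cpow_affine (u := 1) (c := a - (k - j : ℕ)) hw'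
    have h3 := (h1.mul h2).const_mul (((k.choose j : ℂ)) * (z ^ j * Pc b j * Pc a (k - j)))
    convert h3 using 1
    · rfl
    · rfl
    · ext w; simp only [Ff, Pi.mul_apply]; ring
    · -- algebra: recombine into the two shifted terms
      have hjk : j ≤ k := Nat.lt_succ_iff.mp (Finset.mem_range.mp hj)
      have e1 : ((k - j : ℕ) : ℂ) + 1 = ((k + 1 - j : ℕ) : ℂ) := by
        push_cast [Nat.sub_add_comm hjk]; ring
      simp only [Ff, Pc_succ]
      push_cast
      rw [sub_sub, sub_sub]
      ring
  have hsum := HasDerivAt.sum hterm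
  convert hsum using 1
  · rfl
  · rfl
  · funext v; simp only [Hf, Finset.sum_apply]
  have hrecomb := Finset.sum_choose_succ_mul (fun i l => Ff a b z w i l) k
  have e2 : ∀ j ∈ Finset.range (k+1), (k.choose j : ℂ) * (Ff a b z w (j+1) (k-j) + Ff a b z w j (k-j+1))
      = (k.choose j : ℂ) * Ff a b z w j (k+1-j) + (k.choose j : ℂ) * Ff a b z w (j+1) (k-j) := by
    intro j hj
    have hjk : j ≤ k := Nat.lt_succ_iff.mp (Finset.mem_range.mp hj)
    rw [Nat.sub_add_comm hjk]
    ring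
  rw [Finset.sum_congr rfl e2, Finset.sum_add_distrib]
  exact hrecomb

def hF (a b z : ℂ) (w : ℂ) : ℂ := (1 + z * w) ^ b * (1 + w) ^ a

lemma Hf_zero (a b z : ℂ) : Hf a b z 0 = hF a b z := by
  funext w
  simp [Hf, Ff, Pc, hF]

lemma iter_deriv (a b z : ℂ) (hz : ‖z‖ ≤ 1) (k : ℕ) :
    ∀ w : ℂ, ‖w‖ < 1 → iteratedDeriv k (hF a b z) w = Hf a b z k w := by
  induction k with
  | zero => intro w hw; simp [Hf_zero]
  | succ k ih =>
    intro w hw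
    rw [iteratedDeriv_succ]
    have hev : iteratedDeriv k (hF a b z) =ᶠ[nhds w] Hf a b z k := by
      filter_upwards [Metric.isOpen_ball.eventually_mem
        (show w ∈ Metric.ball (0:ℂ) 1 by simpa using hw)] with v hv
      exact ih v (by simpa [Complex.dist_eq] using hv)
    rw [hev.deriv_eq]
    exact (key_step a b z hz k hw).deriv

lemma iter_deriv_zero (a b z : ℂ) (hz : ‖z‖ ≤ 1) (k : ℕ) :
    iteratedDeriv k (hF a b z) 0 =
      ∑ i ∈ Finset.range (k + 1), (k.choose i : ℂ) * (z ^ i * Pc b i * Pc a (k - i)) := by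
  rw [iter_deriv a b z hz k 0 (by simp)]
  simp [Hf, Ff]

lemma hF_differentiableAt (a b z : ℂ) (hz : ‖z‖ ≤ 1) {w : ℂ}
    (hw : ‖w‖ < 1) : DifferentiableAt ℂ (hF a b z) w := by
  rw [← Hf_zero]
  exact (key_step a b z hz 0 hw).differentiableAt

lemma hF_continuousAt (a b z : ℂ) (hz : ‖z‖ ≤ 1) {w : ℂ}
    (hw : ‖w‖ < 1) : ContinuousAt (hF a b z) w :=
  (hF_differentiableAt a b z hz hw).continuousAt

lemma cauchy_bound (a b z : ℂ) (hz : ‖z‖ ≤ 1) (r : ℕ) {ρ : ℝ}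
    (hρ0 : 0 < ρ) (hρ1 : ρ < 1) {M : ℝ}
    (hM : ∀ w : ℂ, ‖w‖ < 1 → ‖(hF a b z w)‖ ≤ M) :
    ‖(iteratedDeriv r (hF a b z) 0)‖ * ρ ^ r ≤ r.factorial * M := by
  set f := hF a b z with hf
  set R : NNReal := ⟨ρ, hρ0.le⟩ with hR
  have hRρ : (R : ℝ) = ρ := rfl
  have hdiff : DifferentiableOn ℂ f (Metric.closedBall 0 (R : ℝ)) := by
    intro w hw
    refine (hF_differentiableAt a b z hz ?_).differentiableWithinAt
    have := Metric.mem_closedBall.mp hw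
    rw [Complex.dist_eq, sub_zero] at this
    exact lt_of_le_of_lt this hρ1
  have hball := hdiff.hasFPowerSeriesOnBall (by exact_mod_cast hρ0)
  set p := cauchyPowerSeries f 0 (R : ℝ) with hp
  have hfact := hball.factorial_smul (1 : ℂ) r
  have hiter : iteratedDeriv r f 0 = r.factorial • (p r fun _ => (1:ℂ)) := by
    rw [iteratedDeriv_eq_iteratedFDeriv, ← hfact]
  have h1 : ‖(iteratedDeriv r f 0)‖ ≤ r.factorial * ‖p r‖ := by
    rw [hiter]
    calc ‖r.factorial • (p r fun _ => (1:ℂ))‖ = r.factorial * ‖p r fun _ => (1:ℂ)‖ := by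
          simp [norm_smul]
      _ ≤ r.factorial * (‖p r‖ * ∏ _i : Fin r, ‖(1:ℂ)‖) :=
          mul_le_mul_of_nonneg_left ((p r).le_opNorm _) (by positivity)
      _ = r.factorial * ‖p r‖ := by simp
  have habsρ : ∀ θ : ℝ, ‖(circleMap 0 ρ θ)‖ < 1 := by
    intro θ
    rw [norm_circleMap_zero, abs_of_pos hρ0]
    exact hρ1
  have hcont : Continuous fun θ : ℝ => f (circleMap 0 ρ θ) := by
    rw [continuous_iff_continuousAt]
    intro θ
    exact (hF_continuousAt a b z hz (habsρ θ)).comp (continuous_circleMap 0 ρ).continuousAt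
  have hMnn : 0 ≤ M := le_trans (norm_nonneg _) (hM 0 (by simp))
  have hint : (∫ θ : ℝ in (0)..2 * Real.pi, ‖f (circleMap 0 ρ θ)‖) ≤ 2 * Real.pi * M := by
    calc (∫ θ : ℝ in (0)..2 * Real.pi, ‖f (circleMap 0 ρ θ)‖)
        ≤ ∫ _θ : ℝ in (0)..2 * Real.pi, M := by
          apply intervalIntegral.integral_mono_on (by positivity)
            (hcont.norm.intervalIntegrable _ _) (intervalIntegrable_const)
          intro θ _
          exact hM _ (habsρ θ)
      _ = 2 * Real.pi * M := by simp
  have h2 : ‖p r‖ ≤ M * ρ⁻¹ ^ r := by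
    calc ‖p r‖ ≤ ((2 * Real.pi)⁻¹ * ∫ θ : ℝ in (0)..2 * Real.pi,
          ‖f (circleMap 0 ρ θ)‖) * |(R:ℝ)|⁻¹ ^ r := norm_cauchyPowerSeries_le f 0 (R:ℝ) r
      _ ≤ ((2 * Real.pi)⁻¹ * (2 * Real.pi * M)) * ρ⁻¹ ^ r := by
          rw [hRρ, abs_of_pos hρ0]
          gcongr
      _ = M * ρ⁻¹ ^ r := by
          rw [inv_mul_eq_div]
          field_simp
  calc ‖(iteratedDeriv r f 0)‖ * ρ ^ r ≤ r.factorial * (M * ρ⁻¹ ^ r) * ρ ^ r := by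
        apply mul_le_mul_of_nonneg_right (le_trans h1 ?_) (by positivity)
        exact mul_le_mul_of_nonneg_left h2 (by positivity)
    _ = r.factorial * M * (ρ⁻¹ ^ r * ρ ^ r) := by ring
    _ = r.factorial * M := by
        rw [← mul_pow, inv_mul_cancel₀ (ne_of_gt hρ0), one_pow, mul_one]

lemma one_add_pos {w : ℂ} (hw : ‖w‖ < 1) : 0 < ‖(1 + w)‖ := by
  have h1 : ‖(1:ℂ)‖ - ‖-w‖ ≤ ‖1 - -w‖ := norm_sub_norm_le _ _
  simp only [norm_one, norm_neg, sub_neg_eq_add] at h1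
  linarith

lemma hF_bound {s' : ℝ} (hs0 : 0 < s') (hs1 : s' < 1) {r : ℕ} (hr : 1 ≤ r)
    {z : ℂ} (hz : ‖z‖ = 1) {w : ℂ} (hw : ‖w‖ < 1) :
    ‖(hF (((r : ℝ) - s' : ℝ) : ℂ) (((r : ℝ) + s' : ℝ) : ℂ) z w)‖ ≤
      4 * (2 + ‖(1 + z)‖) ^ ((r : ℝ) - 1) := by
  set A := ‖(1 + z)‖ with hA
  have hAnn : 0 ≤ A := norm_nonneg _
  set p := ‖(1 + w)‖ with hp
  set q := ‖(1 + z * w)‖ with hq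
  have hzw : ‖(z * w)‖ < 1 := by rw [norm_mul, hz, one_mul]; exact hw
  have hp0 : 0 < p := one_add_pos hw
  have hq0 : 0 < q := one_add_pos hzw
  have hp2 : p ≤ 2 := by
    have := norm_add_le 1 w
    simp only [norm_one] at this
    rw [hp]; linarith
  have hq2 : q ≤ 2 := by
    have := norm_add_le 1 (z * w)
    simp only [norm_one] at this
    rw [hq]; linarith
  have hpq : p * q ≤ 2 + A := by
    have hexp : (1 + w) * (1 + z * w) = 1 + (1 + z) * w + z * w * w := by ring
    calc p * q = ‖((1 + w) * (1 + z * w))‖ := (norm_mul _ _).symm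
      _ = ‖(1 + (1 + z) * w + z * w * w)‖ := by rw [hexp]
      _ ≤ ‖(1 + (1 + z) * w)‖ + ‖(z * w * w)‖ := norm_add_le _ _
      _ ≤ ‖(1:ℂ)‖ + ‖((1 + z) * w)‖ + ‖(z * w * w)‖ := by
          have := norm_add_le 1 ((1 + z) * w)
          linarith
      _ ≤ 1 + A * 1 + 1 := by
          simp only [norm_one, norm_mul, hz, one_mul]
          have h1 : ‖w‖ ≤ 1 := hw.le
          have h2 : ‖w‖ * ‖w‖ ≤ 1 * 1 :=
            mul_le_mul h1 h1 (norm_nonneg _) zero_le_one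
          have h3 : A * ‖w‖ ≤ A * 1 := by
            apply mul_le_mul_of_nonneg_left h1 hAnn
          rw [← hA]
          nlinarith [norm_nonneg w]
      _ = 2 + A := by ring
  -- rewrite the cpow moduli as rpow
  have habs : ‖(hF (((r : ℝ) - s' : ℝ) : ℂ) (((r : ℝ) + s' : ℝ) : ℂ) z w)‖
      = q ^ ((r : ℝ) + s') * p ^ ((r : ℝ) - s') := by
    rw [hF, norm_mul, Complex.norm_cpow_real, Complex.norm_cpow_real]
  rw [habs]
  have hr1 : (0:ℝ) ≤ (r : ℝ) - 1 := by
    have : (1:ℝ) ≤ (r:ℝ) := by exact_mod_cast hr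
    linarith
  have hsplit : q ^ ((r : ℝ) + s') * p ^ ((r : ℝ) - s')
      = (p * q) ^ ((r : ℝ) - 1) * (q ^ (1 + s') * p ^ (1 - s')) := by
    have eq1 : q ^ ((r:ℝ) + s') = q ^ ((r:ℝ) - 1) * q ^ (1 + s') := by
      rw [← Real.rpow_add hq0]; congr 1; ring
    have eq2 : p ^ ((r:ℝ) - s') = p ^ ((r:ℝ) - 1) * p ^ (1 - s') := by
      rw [← Real.rpow_add hp0]; congr 1; ring
    rw [Real.mul_rpow hp0.le hq0.le, eq1, eq2]
    ring
  rw [hsplit]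
  have h4 : q ^ (1 + s') * p ^ (1 - s') ≤ 2 ^ (1 + s') * 2 ^ (1 - s') := by
    apply mul_le_mul
    · exact Real.rpow_le_rpow hq0.le hq2 (by linarith)
    · exact Real.rpow_le_rpow hp0.le hp2 (by linarith)
    · positivity
    · positivity
  have h5 : (2:ℝ) ^ (1 + s') * 2 ^ (1 - s') = 4 := by
    rw [← Real.rpow_add (by norm_num : (0:ℝ) < 2)]
    norm_num
  have h6 : (p * q) ^ ((r : ℝ) - 1) ≤ (2 + A) ^ ((r : ℝ) - 1) :=
    Real.rpow_le_rpow (by positivity) hpq hr1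
  calc (p * q) ^ ((r : ℝ) - 1) * (q ^ (1 + s') * p ^ (1 - s'))
      ≤ (2 + A) ^ ((r : ℝ) - 1) * 4 := by
        apply mul_le_mul h6 (by rw [← h5] at *; exact h4) (by positivity) (by positivity)
    _ = 4 * (2 + A) ^ ((r : ℝ) - 1) := by ring

lemma gamma_prod (s : ℝ) (hs : 0 < s) (r : ℕ) :
    Real.Gamma ((r : ℝ) + s) = Real.Gamma s * ∏ j ∈ Finset.range r, (s + j) := by
  induction r with
  | zero => simp
  | succ r ih =>
    have h1 : ((r + 1 : ℕ) : ℝ) + s = ((r : ℝ) + s) + 1 := by push_cast; ring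
    have h2 : (r : ℝ) + s ≠ 0 := by positivity
    rw [h1, Real.Gamma_add_one h2, ih, Finset.prod_range_succ]
    ring

/-- the product form of the coefficients -/
lemma coef_id {m n : ℕ} (hm : 0 < m) (hmn : m < n) (r k : ℕ) (hk : k ≤ r) :
    (Xcoef m n r k : ℝ) * ∏ j ∈ Finset.range r, ((j : ℝ) + 1 - (m : ℝ) / n) =
      (r.choose k : ℝ) * (∏ i ∈ Finset.range k, ((r : ℝ) + (m : ℝ) / n - i)) *
        ∏ i ∈ Finset.range (r - k), ((r : ℝ) - (m : ℝ) / n - i) := by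
  set s' : ℝ := (m : ℝ) / n with hs'
  have hn : (0:ℝ) < n := by exact_mod_cast hm.trans hmn
  have hden : ∀ j : ℕ, (0:ℝ) < (j : ℝ) + 1 - s' := by
    intro j
    have : s' < 1 := by
      rw [hs', div_lt_one hn]
      exact_mod_cast hmn
    have hj : (0:ℝ) ≤ (j:ℝ) := Nat.cast_nonneg j
    linarith
  have hcast : (Xcoef m n r k : ℝ) = (r.choose k : ℝ) *
      ∏ j ∈ Finset.range k, ((((r:ℝ) - j) * n + m) / (((j:ℝ) + 1) * n - m)) := by
    rw [Xcoef]
    push_cast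
    rfl
  have hfac : ∀ j : ℕ, (((r:ℝ) - j) * n + m) / (((j:ℝ) + 1) * n - m)
      = ((r:ℝ) + s' - j) / ((j:ℝ) + 1 - s') := by
    intro j
    have hn0 : (n:ℝ) ≠ 0 := ne_of_gt hn
    have e1 : ((r:ℝ) - j) * n + m = ((r:ℝ) + s' - j) * n := by
      rw [hs']; field_simp; ring
    have e2 : ((j:ℝ) + 1) * n - m = ((j:ℝ) + 1 - s') * n := by
      rw [hs']; field_simp
    rw [e1, e2, mul_div_mul_right _ _ hn0]
  rw [hcast, Finset.prod_congr rfl (fun j _ => hfac j), Finset.prod_div_distrib]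
  -- split the long denominator product
  have hsplit : (∏ j ∈ Finset.range r, ((j : ℝ) + 1 - s'))
      = (∏ j ∈ Finset.range k, ((j : ℝ) + 1 - s')) *
        ∏ j ∈ Finset.range (r - k), (((k + j : ℕ) : ℝ) + 1 - s') := by
    rw [← Finset.prod_range_add (fun j => ((j:ℝ) + 1 - s')) k (r - k), Nat.add_sub_cancel' hk]
  have hreflect : (∏ i ∈ Finset.range (r - k), ((r : ℝ) - s' - i))
      = ∏ j ∈ Finset.range (r - k), (((k + j : ℕ) : ℝ) + 1 - s') := by
    rw [← Finset.prod_range_reflect]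
    apply Finset.prod_congr rfl
    intro i hi
    have hi' : i < r - k := Finset.mem_range.mp hi
    have h1 : ((r - k - 1 - i : ℕ) : ℝ) = (r:ℝ) - k - 1 - i := by
      have : r - k - 1 - i = r - (k + 1 + i) := by omega
      rw [this, Nat.cast_sub (by omega)]
      push_cast
      ring
    rw [h1]
    push_cast
    ring
  rw [hsplit, hreflect]
  have hne : (∏ j ∈ Finset.range k, ((j : ℝ) + 1 - s')) ≠ 0 :=
    ne_of_gt (Finset.prod_pos fun j _ => hden j)
  field_simp

lemma sqrt_facts {z : ℂ} (hz : ‖z‖ = 1) :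
    ‖(z ^ (1/2 : ℂ))‖ = 1 ∧ 0 ≤ (z ^ (1/2 : ℂ)).re ∧
      (z ^ (1/2 : ℂ)) * (z ^ (1/2 : ℂ)) = z := by
  have hz0 : z ≠ 0 := by
    intro h; rw [h] at hz; simp at hz
  refine ⟨?_, ?_, ?_⟩
  · have : (1/2 : ℂ) = ((1/2 : ℝ) : ℂ) := by norm_num
    rw [this, Complex.norm_cpow_real, hz, Real.one_rpow]
  · rw [Complex.cpow_def_of_ne_zero hz0]
    rw [Complex.exp_re]
    apply mul_nonneg (Real.exp_nonneg _)
    have him : (Complex.log z * (1/2)).im = z.arg / 2 := by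
      simp [Complex.mul_im, Complex.log_im]
      ring
    rw [him]
    apply Real.cos_nonneg_of_mem_Icc
    constructor
    · have := Complex.neg_pi_lt_arg z
      linarith
    · have := Complex.arg_le_pi z
      linarith [Real.pi_pos]
  · rw [← Complex.cpow_add _ _ hz0]
    norm_num

lemma geom_facts {z : ℂ} (hz : ‖z‖ = 1) (hz1 : ‖(z - 1)‖ < 1) :
    Real.sqrt 3 < ‖(1 + z)‖ ∧
      ‖(1 + z ^ (1/2 : ℂ))‖ ^ 2 = 2 + ‖(1 + z)‖ := by
  obtain ⟨hu1, hure, huu⟩ := sqrt_facts hz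
  set u := z ^ (1/2 : ℂ) with hu
  have hre : 1 / 2 < z.re := by
    have h1 : Complex.normSq (z - 1) < 1 := by
      have := Complex.sq_norm (z - 1)
      nlinarith [norm_nonneg (z - 1)]
    have h2 : Complex.normSq z = 1 := by
      have := Complex.sq_norm z
      nlinarith
    simp only [Complex.normSq_apply, Complex.sub_re, Complex.sub_im, Complex.one_re,
      Complex.one_im] at h1 h2
    nlinarith
  have hnormz : z.re * z.re + z.im * z.im = 1 := by
    have := Complex.sq_norm z
    rw [hz] at this
    simpa [Complex.normSq_apply] using this.symm
  constructor
  · have hA2 : ‖(1 + z)‖ ^ 2 = 2 + 2 * z.re := by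
      rw [Complex.sq_norm]
      simp only [Complex.normSq_apply, Complex.add_re, Complex.add_im, Complex.one_re,
        Complex.one_im]
      nlinarith
    have hs3 : Real.sqrt 3 ^ 2 = 3 := Real.sq_sqrt (by norm_num)
    nlinarith [Real.sqrt_nonneg 3, norm_nonneg (1 + z)]
  · -- |1+u|^2 = 2 + 2 u.re and |1+z| = 2 u.re
    have hnsq : Complex.normSq u = 1 := by
      have := Complex.sq_norm u
      rw [hu1] at this
      nlinarith
    have h1 : ‖(1 + u)‖ ^ 2 = 2 + 2 * u.re := by
      rw [Complex.sq_norm]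
      have := hnsq
      simp only [Complex.normSq_apply] at this ⊢
      simp only [Complex.add_re, Complex.add_im, Complex.one_re, Complex.one_im]
      nlinarith
    have h2 : ‖(1 + z)‖ = 2 * u.re := by
      have e1 : (1 : ℂ) + z = u * ((starRingEnd ℂ) u + u) := by
        rw [mul_add, Complex.mul_conj, hnsq, huu]
        norm_num
      have e2 : (starRingEnd ℂ) u + u = ((2 * u.re : ℝ) : ℂ) := by
        rw [add_comm, Complex.add_conj]
      rw [e1, norm_mul, hu1, one_mul, e2, Complex.norm_real, Real.norm_eq_abs,
        _root_.abs_of_nonneg (by linarith : (0:ℝ) ≤ 2 * u.re)]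
    rw [h1, h2]

end Aux

theorem stmt_7 (m n r : ℕ) (hm : 0 < m) (hmn : m < n) (hcop : Nat.Coprime m n)
    (z : ℂ) (hz : ‖z‖ = 1) (hz1 : ‖(z - 1)‖ < 1) :
    ‖(Xfun m n r z)‖ <
      1.072 * ((r.factorial : ℝ) * Real.Gamma (1 - (m : ℝ) / n) /
          Real.Gamma ((r : ℝ) + 1 - (m : ℝ) / n)) *
        ‖(1 + z ^ (1/2 : ℂ))‖ ^ (2 * r) := by
  have hn : 0 < n := hm.trans hmn
  set s' : ℝ := (m : ℝ) / n with hs'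
  have hnR : (0:ℝ) < n := by exact_mod_cast hn
  have hs0 : 0 < s' := by positivity
  have hs1 : s' < 1 := by
    rw [hs', div_lt_one hnR]; exact_mod_cast hmn
  have hΓpos : 0 < Real.Gamma (1 - s') := Real.Gamma_pos_of_pos (by linarith)
  obtain ⟨hA3, hXA⟩ := geom_facts hz hz1
  set A := ‖(1 + z)‖ with hA
  have hApos : (0:ℝ) < 2 + A := by positivity
  have h4A : 4 < 1.072 * (2 + A) := by
    have h17 : (1.7314:ℝ) < Real.sqrt 3 := by
      rw [show (1.7314:ℝ) = Real.sqrt (1.7314^2) by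
        rw [Real.sqrt_sq]; norm_num]
      apply Real.sqrt_lt_sqrt (by positivity)
      norm_num
    linarith
  -- the Gamma quotient
  set g : ℝ := ∏ j ∈ Finset.range r, ((j : ℝ) + 1 - s') with hg
  have hgpos : 0 < g := Finset.prod_pos fun j _ => by
    have : (0:ℝ) ≤ (j:ℝ) := Nat.cast_nonneg j
    linarith
  have hGamma : Real.Gamma ((r:ℝ) + 1 - s') = Real.Gamma (1 - s') * g := by
    have := gamma_prod (1 - s') (by linarith) r
    rw [show (r:ℝ) + 1 - s' = (r:ℝ) + (1 - s') by ring, this, hg]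
    congr 1
    exact Finset.prod_congr rfl fun j _ => by ring
  have hGfact : (r.factorial : ℝ) * Real.Gamma (1 - s') / Real.Gamma ((r:ℝ) + 1 - s')
      = r.factorial / g := by
    rw [hGamma]
    field_simp
  rcases Nat.eq_zero_or_pos r with rfl | hr
  · -- r = 0
    have hX1 : Xfun m n 0 z = 1 := by
      simp [Xfun, Xcoef]
    rw [hX1]
    simp only [Nat.cast_zero, Nat.factorial_zero, Nat.cast_one, mul_zero, pow_zero, mul_one]
    have : (1:ℝ) * Real.Gamma (1 - (m:ℝ)/n) / Real.Gamma ((0:ℝ) + 1 - (m:ℝ)/n) = 1 := by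
      rw [zero_add]
      rw [one_mul, div_self (ne_of_gt hΓpos)]
    rw [this]
    norm_num
  · -- main case
    set aC : ℂ := (((r:ℝ) - s' : ℝ) : ℂ) with haC
    set bC : ℂ := (((r:ℝ) + s' : ℝ) : ℂ) with hbC
    have hzle : ‖z‖ ≤ 1 := le_of_eq hz
    -- identity : Xfun * g = iteratedDeriv
    have hiter := iter_deriv_zero aC bC z hzle r
    have hXg : Xfun m n r z * (g : ℂ) = iteratedDeriv r (hF aC bC z) 0 := by
      rw [hiter, Xfun, Finset.sum_mul]
      apply Finset.sum_congr rfl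
      intro k hk
      have hkr : k ≤ r := Nat.lt_succ_iff.mp (Finset.mem_range.mp hk)
      have hid := coef_id hm hmn r k hkr
      have hPb : Pc bC k = ((∏ i ∈ Finset.range k, ((r : ℝ) + s' - i) : ℝ) : ℂ) := by
        rw [Pc, Complex.ofReal_prod]
        apply Finset.prod_congr rfl
        intro i _
        rw [hbC]
        push_cast
        ring
      have hPa : Pc aC (r - k) = ((∏ i ∈ Finset.range (r - k), ((r : ℝ) - s' - i) : ℝ) : ℂ) := by
        rw [Pc, Complex.ofReal_prod]
        apply Finset.prod_congr rfl
        intro i _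
        rw [haC]
        push_cast
        ring
      calc (Xcoef m n r k : ℂ) * z ^ k * (g:ℂ)
          = (((Xcoef m n r k : ℝ) * g : ℝ) : ℂ) * z ^ k := by push_cast; ring
        _ = (((r.choose k : ℝ) * (∏ i ∈ Finset.range k, ((r : ℝ) + s' - i)) *
              ∏ i ∈ Finset.range (r - k), ((r : ℝ) - s' - i) : ℝ) : ℂ) * z ^ k := by
            rw [hg, hid]
        _ = (r.choose k : ℂ) * (z ^ k * Pc bC k * Pc aC (r - k)) := by
            rw [hPa, hPb]
            push_cast
            ring
    -- bound on the iterated derivative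
    set c : ℝ := ‖(iteratedDeriv r (hF aC bC z) 0)‖ with hc
    have hbnd : ∀ ρ : ℝ, ρ ∈ Set.Ioo (0:ℝ) 1 →
        c * ρ ^ r ≤ r.factorial * (4 * (2 + A) ^ ((r:ℝ) - 1)) := by
      intro ρ hρ
      exact cauchy_bound aC bC z hzle r hρ.1 hρ.2
        (fun w hw => hF_bound hs0 hs1 hr hz hw)
    have hlim : c ≤ r.factorial * (4 * (2 + A) ^ ((r:ℝ) - 1)) := by
      have htend : Filter.Tendsto (fun ρ : ℝ => c * ρ ^ r) (nhdsWithin 1 (Set.Iio 1))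
          (nhds (c * 1 ^ r)) := by
        apply Filter.Tendsto.mono_left _ nhdsWithin_le_nhds
        exact (continuous_const.mul (continuous_pow r)).tendsto 1
      rw [one_pow, mul_one] at htend
      apply le_of_tendsto htend
      filter_upwards [Ioo_mem_nhdsLT_of_mem (show (1:ℝ) ∈ Set.Ioc 0 1 by norm_num)] with ρ hρ
      exact hbnd ρ hρ
    -- final computation
    have hXabs : ‖(Xfun m n r z)‖ * g = c := by
      rw [hc, ← hXg, norm_mul]
      congr 1
      rw [Complex.norm_real, Real.norm_eq_abs, _root_.abs_of_pos hgpos]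
    have hpow : ‖(1 + z ^ (1/2:ℂ))‖ ^ (2 * r) = (2 + A) ^ r := by
      rw [mul_comm 2 r, pow_mul', hXA]
    rw [hGfact, hpow]
    have hrpow : (2 + A) ^ ((r:ℝ) - 1) * (2 + A) = (2 + A) ^ r := by
      rw [← Real.rpow_natCast (2 + A) r, ← Real.rpow_add_one (ne_of_gt hApos)]
      congr 1
      ring
    have hfin : (r.factorial : ℝ) * (4 * (2 + A) ^ ((r:ℝ) - 1)) <
        1.072 * (r.factorial / g) * (2 + A) ^ r * g := by
      rw [← hrpow]
      have hfpos : (0:ℝ) < r.factorial := by positivity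
      have hrp : (0:ℝ) < (2 + A) ^ ((r:ℝ) - 1) := Real.rpow_pos_of_pos hApos _
      have : 1.072 * (r.factorial / g) * ((2 + A) ^ ((r:ℝ) - 1) * (2 + A)) * g
          = (r.factorial : ℝ) * ((2 + A) ^ ((r:ℝ) - 1) * (1.072 * (2 + A))) := by
        field_simp
      rw [this]
      have h1 : (4:ℝ) * (2 + A) ^ ((r:ℝ) - 1) < (2 + A) ^ ((r:ℝ) - 1) * (1.072 * (2 + A)) := by
        rw [mul_comm]
        exact (mul_lt_mul_iff_right₀ hrp).mpr h4A
      exact (mul_lt_mul_iff_right₀ hfpos).mpr h1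
    calc ‖(Xfun m n r z)‖ = c / g := by
          rw [← hXabs]; field_simp
      _ ≤ (r.factorial * (4 * (2 + A) ^ ((r:ℝ) - 1))) / g := by
          exact div_le_div_of_nonneg_right hlim hgpos.le -- ?
      _ < 1.072 * ((r.factorial : ℝ) / g) * (2 + A) ^ r := by
          rw [div_lt_iff₀ hgpos]
          exact hfin
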